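/- Let Ω ⊆ ℝ² be open and let λ : ℝ² → ℂ be differentiable on Ω with Im λ > 0 on Ω. Define μ := −(1 + iλ)/(1 − iλ) on Ω (well-defined since 1 − iλ ≠ 0 when Im λ > 0). Then μ is differentiable on Ω and at every point of Ω one has μ_{z̄} − μ·μ_z = (−2i/(1 − iλ)³)·(λ_x + λ·λ_y). In particular, λ satisfies the inviscid Burgers equation λ_x + λ·λ_y = 0 on Ω if and only if μ satisfies the self-dilatation equation μ_{z̄} = μ·μ_z on Ω. -/

import Mathlib

open Complex

noncomputable def pdx (f : ℝ × ℝ → ℂ) (p : ℝ × ℝ) : ℂ := fderiv ℝ f p (1, 0)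
noncomputable def pdy (f : ℝ × ℝ → ℂ) (p : ℝ × ℝ) : ℂ := fderiv ℝ f p (0, 1)
/-- Wirtinger derivative `g_z := (g_x − i g_y)/2`. -/
noncomputable def wdz (f : ℝ × ℝ → ℂ) (p : ℝ × ℝ) : ℂ := (pdx f p - I * pdy f p) / 2
/-- Wirtinger derivative `g_{z̄} := (g_x + i g_y)/2`. -/
noncomputable def wdzbar (f : ℝ × ℝ → ℂ) (p : ℝ × ℝ) : ℂ := (pdx f p + I * pdy f p) / 2

lemma cayley_deriv (z : ℂ) (hd : 1 - I * z ≠ 0) :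
    HasDerivAt (fun w : ℂ => -(1 + I * w) / (1 - I * w)) (-2 * I / (1 - I * z) ^ 2) z := by
  have h1 : HasDerivAt (fun w : ℂ => -(1 + I * w)) (-I) z := by
    have := (((hasDerivAt_id z).const_mul I).const_add 1).neg
    simp only [id, mul_one] at this
    exact this
  have h2 : HasDerivAt (fun w : ℂ => 1 - I * w) (-I) z := by
    simpa using ((hasDerivAt_id z).const_mul I).const_sub 1
  have := h1.div h2 hd
  refine HasDerivAt.congr_deriv this ?_
  rw [div_left_inj' (pow_ne_zero 2 hd)]
  ring

lemma comp_deriv (lam : ℝ × ℝ → ℂ) (p : ℝ × ℝ) (hlam : DifferentiableAt ℝ lam p)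
    (hd : 1 - I * lam p ≠ 0) :
    HasFDerivAt (fun q => -(1 + I * lam q) / (1 - I * lam q))
      ((-2 * I / (1 - I * lam p) ^ 2) • (fderiv ℝ lam p)) p := by
  have hf := cayley_deriv (lam p) hd
  have := (hf.hasFDerivAt.restrictScalars ℝ).comp p hlam.hasFDerivAt
  refine HasFDerivAt.congr_fderiv this ?_
  refine ContinuousLinearMap.ext fun v => ?_
  simp [mul_comm]

/-- Self-dilatation: the Burgers equation for `λ` is equivalent to
`μ_{z̄} = μ·μ_z` for the Cayley transform `μ = −(1+iλ)/(1−iλ)`. -/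
theorem stmt6
    (Ω : Set (ℝ × ℝ)) (hΩ : IsOpen Ω)
    (lam : ℝ × ℝ → ℂ)
    (hlam : ∀ p ∈ Ω, DifferentiableAt ℝ lam p)
    (him : ∀ p ∈ Ω, 0 < (lam p).im)
    (μ : ℝ × ℝ → ℂ)
    (hμ : ∀ p ∈ Ω, μ p = -(1 + I * lam p) / (1 - I * lam p)) :
    (∀ p ∈ Ω, DifferentiableAt ℝ μ p) ∧
    (∀ p ∈ Ω,
      wdzbar μ p - μ p * wdz μ p
        = (-2 * I / (1 - I * lam p) ^ 3) * (pdx lam p + lam p * pdy lam p)) ∧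
    ((∀ p ∈ Ω, pdx lam p + lam p * pdy lam p = 0) ↔
      (∀ p ∈ Ω, wdzbar μ p = μ p * wdz μ p)) := by
  -- nonvanishing of the denominator
  have hd : ∀ p ∈ Ω, 1 - I * lam p ≠ 0 := by
    intro p hp h
    have hre : (1 - I * lam p).re = 1 + (lam p).im := by
      simp [Complex.sub_re, Complex.mul_re]
    rw [h] at hre
    have := him p hp
    simp at hre
    linarith
  -- μ has the expected derivative at each point of Ω
  have hkey : ∀ p ∈ Ω,
      HasFDerivAt μ ((-2 * I / (1 - I * lam p) ^ 2) • (fderiv ℝ lam p)) p := by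
    intro p hp
    have heq : μ =ᶠ[nhds p] fun q => -(1 + I * lam q) / (1 - I * lam q) := by
      filter_upwards [hΩ.mem_nhds hp] with q hq using hμ q hq
    exact (comp_deriv lam p (hlam p hp) (hd p hp)).congr_of_eventuallyEq heq
  have hdiff : ∀ p ∈ Ω, DifferentiableAt ℝ μ p := fun p hp =>
    (hkey p hp).differentiableAt
  -- the partial derivatives of μ
  have hpdx : ∀ p ∈ Ω, pdx μ p = (-2 * I / (1 - I * lam p) ^ 2) * pdx lam p := by
    intro p hp
    simp [pdx, (hkey p hp).fderiv, smul_eq_mul]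
  have hpdy : ∀ p ∈ Ω, pdy μ p = (-2 * I / (1 - I * lam p) ^ 2) * pdy lam p := by
    intro p hp
    simp [pdy, (hkey p hp).fderiv, smul_eq_mul]
  -- the main identity
  have hid : ∀ p ∈ Ω,
      wdzbar μ p - μ p * wdz μ p
        = (-2 * I / (1 - I * lam p) ^ 3) * (pdx lam p + lam p * pdy lam p) := by
    intro p hp
    have h0 := hd p hp
    set a := lam p with ha
    set d : ℂ := 1 - I * a with hdd
    set c : ℂ := -2 * I / d ^ 2 with hc
    have h1mu : 1 - μ p = 2 / d := by
      rw [hμ p hp, ← ha, ← hdd]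
      field_simp
      ring
    have h2mu : I * (1 + μ p) = 2 * a / d := by
      rw [hμ p hp, ← ha, ← hdd]
      field_simp
      linear_combination (-2 * a) * Complex.I_sq
    have hstep : wdzbar μ p - μ p * wdz μ p
        = (c / 2) * ((1 - μ p) * pdx lam p + (I * (1 + μ p)) * pdy lam p) := by
      rw [wdzbar, wdz, hpdx p hp, hpdy p hp, ← ha, ← hdd, ← hc]
      ring
    rw [hstep, h1mu, h2mu, hc]
    field_simp
  refine ⟨hdiff, hid, ?_, ?_⟩
  · intro hB p hp
    have := hid p hp
    rw [hB p hp, mul_zero, sub_eq_zero] at this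
    exact this
  · intro hS p hp
    have := hid p hp
    rw [hS p hp, sub_self] at this
    have hc : (-2 * I / (1 - I * lam p) ^ 3) ≠ 0 := by
      apply div_ne_zero
      · simp [Complex.I_ne_zero]
      · exact pow_ne_zero _ (hd p hp)
    exact (mul_eq_zero.mp this.symm).resolve_left hc
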